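/- Let $P$ and $Q$ be probability measures with $P \ll Q$, natural-log divergence $I(P|Q) = E_P[\ln(dP/dQ)]$. Then $I(P|Q) \le E_P|\ln(dP/dQ)| \le I(P|Q) + \sqrt{2 I(P|Q)}$. -/

import Mathlib

open MeasureTheory Real

lemma aux_mono0 (q : ℝ) (hq0 : 0 ≤ q) (hq1 : q < 1) : 2*q^2 ≤ -Real.log (1-q) := by
  set F : ℝ → ℝ := fun t => -Real.log (1-t) - 2*t^2 with hF
  have key : MonotoneOn F (Set.Icc 0 q) := by
    have hderiv : ∀ t ∈ Set.Ioo (0:ℝ) q, HasDerivAt F ((1-2*t)^2/(1-t)) t := by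
      intro t ht
      have ht1 : 1 - t ≠ 0 := by nlinarith [ht.2]
      have h1 : HasDerivAt (fun t : ℝ => Real.log (1-t)) ((1-t)⁻¹ * (-1)) t :=
        (Real.hasDerivAt_log ht1).comp t ((hasDerivAt_id t).const_sub 1)
      have h2 : HasDerivAt (fun t : ℝ => 2*t^2) (2*(2*t^1*1)) t :=
        (((hasDerivAt_id t).pow 2)).const_mul 2
      have := (h1.neg).sub h2
      refine this.congr_deriv ?_
      field_simp
      ring
    apply monotoneOn_of_deriv_nonneg (convex_Icc 0 q)
    · apply ContinuousOn.sub
      · apply ContinuousOn.neg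
        apply ContinuousOn.log (by fun_prop)
        intro x hx
        simp only [Set.mem_Icc] at hx
        nlinarith [hx.2]
      · fun_prop
    · intro t ht
      rw [interior_Icc] at ht
      exact ((hderiv t ht).differentiableAt).differentiableWithinAt
    · intro t ht
      rw [interior_Icc] at ht
      rw [(hderiv t ht).deriv]
      have ht1 : 0 < 1 - t := by nlinarith [ht.2]
      positivity
  rcases eq_or_lt_of_le hq0 with h | h
  · simp [← h]
  · have := key (Set.left_mem_Icc.2 hq0) (Set.right_mem_Icc.2 hq0) hq0
    simp only [hF] at this
    simp only [sub_zero, Real.log_one] at this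
    nlinarith [this]

lemma aux_pinsker_real (p q : ℝ) (hp : 0 ≤ p) (hpq : p ≤ q) (hq : q < 1) :
    2*(q-p)^2 ≤ p*(Real.log p - Real.log q) + (1-p)*(Real.log (1-p) - Real.log (1-q)) := by
  rcases eq_or_lt_of_le hp with hp0 | hp0
  · -- p = 0
    have h := aux_mono0 q (hp0 ▸ hpq) hq
    rw [← hp0]
    simp only [zero_mul, sub_zero, one_mul, Real.log_one, zero_sub]
    linarith
  · -- p > 0
    set F : ℝ → ℝ := fun t => -(p * Real.log t) - (1-p)*Real.log (1-t) - 2*(t-p)^2 with hF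
    have key : MonotoneOn F (Set.Icc p q) := by
      have hderiv : ∀ t ∈ Set.Ioo p q, HasDerivAt F ((t-p)*(1-2*t)^2/(t*(1-t))) t := by
        intro t ht
        have ht0 : (0:ℝ) < t := lt_trans hp0 ht.1
        have ht1 : (0:ℝ) < 1 - t := by nlinarith [ht.2]
        have h1 : HasDerivAt (fun t : ℝ => p * Real.log t) (p * t⁻¹) t :=
          (Real.hasDerivAt_log ht0.ne').const_mul p
        have h2 : HasDerivAt (fun t : ℝ => (1-p) * Real.log (1-t)) ((1-p) * ((1-t)⁻¹ * (-1))) t :=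
          ((Real.hasDerivAt_log ht1.ne').comp t ((hasDerivAt_id t).const_sub 1)).const_mul (1-p)
        have h3 : HasDerivAt (fun t : ℝ => 2*(t-p)^2) (2*(2*(t-p)^1*1)) t :=
          (((hasDerivAt_id t).sub_const p).pow 2).const_mul 2
        have := ((h1.neg).sub h2).sub h3
        refine this.congr_deriv ?_
        field_simp
        ring
      apply monotoneOn_of_deriv_nonneg (convex_Icc p q)
      · apply ContinuousOn.sub
        apply ContinuousOn.sub
        · apply ContinuousOn.neg
          apply ContinuousOn.mul continuousOn_const
          apply ContinuousOn.log (by fun_prop)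
          intro x hx
          simp only [Set.mem_Icc] at hx
          nlinarith [hx.1]
        · apply ContinuousOn.mul continuousOn_const
          apply ContinuousOn.log (by fun_prop)
          intro x hx
          simp only [Set.mem_Icc] at hx
          nlinarith [hx.2]
        · fun_prop
      · intro t ht
        rw [interior_Icc] at ht
        exact ((hderiv t ht).differentiableAt).differentiableWithinAt
      · intro t ht
        rw [interior_Icc] at ht
        rw [(hderiv t ht).deriv]
        have ht0 : (0:ℝ) < t := lt_trans hp0 ht.1
        have ht1 : (0:ℝ) < 1 - t := by nlinarith [ht.2]
        have htp : (0:ℝ) ≤ t - p := by linarith [ht.1]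
        positivity
    rcases eq_or_lt_of_le hpq with h | h
    · rw [← h]; simp
    · have := key (Set.left_mem_Icc.2 hpq) (Set.right_mem_Icc.2 hpq) hpq
      simp only [hF] at this
      nlinarith [this]

lemma aux_inv_rnDeriv {α : Type*} [MeasurableSpace α]
    (P Q : Measure α) [IsProbabilityMeasure P] [IsProbabilityMeasure Q] (hac : P ≪ Q) :
    Integrable (fun x => ((P.rnDeriv Q x).toReal)⁻¹) P ∧
    ∀ S : Set α, MeasurableSet S →
      ∫ x in S, ((P.rnDeriv Q x).toReal)⁻¹ ∂P ≤ (Q S).toReal := by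
  have hmf : Measurable fun x => (P.rnDeriv Q x).toReal :=
    (Measure.measurable_rnDeriv P Q).ennreal_toReal
  set g : α → ℝ := fun x => (P.rnDeriv Q x).toReal • ((P.rnDeriv Q x).toReal)⁻¹ with hg
  have hgle : ∀ x, g x ≤ 1 := by
    intro x
    simp only [hg, smul_eq_mul]
    rcases eq_or_ne ((P.rnDeriv Q x).toReal) 0 with h | h
    · simp [h]
    · rw [mul_inv_cancel₀ h]
  have hg0 : ∀ x, 0 ≤ g x := fun x => mul_nonneg ENNReal.toReal_nonneg (by positivity)
  have hgint : Integrable g Q := by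
    apply Integrable.mono' (integrable_const (1:ℝ)) (by fun_prop)
    filter_upwards with x
    rw [Real.norm_eq_abs, abs_of_nonneg (hg0 x)]
    exact hgle x
  constructor
  · exact (integrable_rnDeriv_smul_iff hac).mp hgint
  · intro S hS
    rw [← setIntegral_rnDeriv_smul hac hS]
    calc ∫ x in S, g x ∂Q ≤ ∫ _x in S, (1:ℝ) ∂Q := by
          apply setIntegral_mono_on hgint.integrableOn (integrable_const 1).integrableOn hS
          intro x _; exact hgle x
      _ = (Q S).toReal := by simp [Measure.real]

/-- Pinsker's two-sided inequality with Barron's constant `Γ = √2` (natural logs):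
if `P ≪ Q` and `I(P|Q) = ∫ log(dP/dQ) dP` is finite, then
`I(P|Q) ≤ ∫ |log(dP/dQ)| dP ≤ I(P|Q) + √(2 I(P|Q))`. -/
theorem stmt_7 {α : Type*} [MeasurableSpace α]
    (P Q : Measure α) [IsProbabilityMeasure P] [IsProbabilityMeasure Q]
    (hac : P ≪ Q)
    (hInt : Integrable (fun x => Real.log (P.rnDeriv Q x).toReal) P) :
    (∫ x, Real.log (P.rnDeriv Q x).toReal ∂P)
        ≤ ∫ x, |Real.log (P.rnDeriv Q x).toReal| ∂P ∧
    (∫ x, |Real.log (P.rnDeriv Q x).toReal| ∂P)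
        ≤ (∫ x, Real.log (P.rnDeriv Q x).toReal ∂P) +
            Real.sqrt (2 * ∫ x, Real.log (P.rnDeriv Q x).toReal ∂P) := by
  obtain ⟨hinv_int, hinv_le⟩ := aux_inv_rnDeriv P Q hac
  set f : α → ℝ := fun x => (P.rnDeriv Q x).toReal with hf
  have hmf : Measurable f := (Measure.measurable_rnDeriv P Q).ennreal_toReal
  set L : α → ℝ := fun x => Real.log (f x) with hLdef
  have hIntL : Integrable L P := hInt
  constructor
  · exact integral_mono hIntL hIntL.abs fun x => le_abs_self _
  set A : Set α := {x | f x < 1} with hA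
  have hAm : MeasurableSet A := measurableSet_lt hmf measurable_const
  have hpos : ∀ᵐ x ∂P, 0 < f x := by
    filter_upwards [Measure.rnDeriv_pos hac, hac.ae_le (Measure.rnDeriv_lt_top P Q)]
      with x h1 h2
    exact ENNReal.toReal_pos h1.ne' h2.ne
  have habs : ∀ x, |L x| = L x + 2 * A.indicator (fun y => -L y) x := by
    intro x
    by_cases hx : f x < 1
    · have hL0 : L x ≤ 0 := Real.log_nonpos ENNReal.toReal_nonneg hx.le
      rw [Set.indicator_of_mem (by exact hx : x ∈ A), abs_of_nonpos hL0]
      ring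
    · have hL0 : 0 ≤ L x := Real.log_nonneg (not_lt.mp hx)
      rw [Set.indicator_of_notMem (by exact hx : x ∉ A), abs_of_nonneg hL0]
      ring
  have hIndInt : Integrable (A.indicator (fun y => -L y)) P := hIntL.neg.indicator hAm
  have hsplit : ∫ x, |L x| ∂P = (∫ x, L x ∂P) + 2 * ∫ x in A, -L x ∂P := by
    rw [← integral_indicator hAm, ← integral_const_mul,
      ← integral_add hIntL (hIndInt.const_mul 2)]
    exact integral_congr_ae (Filter.Eventually.of_forall habs)
  set p : ℝ := (P A).toReal with hp
  set q : ℝ := (Q A).toReal with hq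
  have hN : ∫ x in A, -L x ∂P ≤ q - p := by
    have hle : ∀ᵐ x ∂(P.restrict A), -L x ≤ (f x)⁻¹ - 1 := by
      filter_upwards [ae_restrict_of_ae hpos] with x hx
      have h2 := Real.log_le_sub_one_of_pos (show (0:ℝ) < (f x)⁻¹ by positivity)
      rw [Real.log_inv] at h2
      linarith
    calc ∫ x in A, -L x ∂P ≤ ∫ x in A, ((f x)⁻¹ - 1) ∂P :=
          integral_mono_ae hIntL.neg.integrableOn
            (hinv_int.sub (integrable_const 1)).integrableOn hle
      _ = (∫ x in A, (f x)⁻¹ ∂P) - p := by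
          rw [integral_sub hinv_int.integrableOn (integrable_const 1).integrableOn]
          simp [hp, Measure.real]
          rfl
      _ ≤ q - p := by have := hinv_le A hAm; linarith
  rw [hsplit]
  rcases le_or_gt q p with hqp | hpq
  · have h0 := Real.sqrt_nonneg (2 * ∫ x, L x ∂P)
    linarith
  · have hp0 : (0:ℝ) ≤ p := ENNReal.toReal_nonneg
    have hq1 : q < 1 := by
      rcases lt_or_ge q 1 with h | h
      · exact h
      · exfalso
        have hqle : q ≤ 1 := by
          rw [hq]
          exact ENNReal.toReal_le_of_le_ofReal one_pos.le (by simpa using prob_le_one)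
        have hqeq : Q A = 1 := by
          rw [← ENNReal.toReal_eq_one_iff]
          linarith
        have hQAc : Q Aᶜ = 0 := by
          rw [prob_compl_eq_zero_iff hAm]
          exact hqeq
        have hPA : P A = 1 := (prob_compl_eq_zero_iff hAm).mp (hac hQAc)
        rw [hp, hPA] at hpq
        simp at hpq
        linarith
    have hq0 : (0:ℝ) < q := lt_of_le_of_lt hp0 hpq
    have hp1 : p < 1 := lt_trans hpq hq1
    have hPAc : (P Aᶜ).toReal = 1 - p := by
      rw [prob_compl_eq_one_sub hAm, ENNReal.toReal_sub_of_le prob_le_one ENNReal.one_ne_top]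
      simp [hp]
    have hQAc : (Q Aᶜ).toReal = 1 - q := by
      rw [prob_compl_eq_one_sub hAm, ENNReal.toReal_sub_of_le prob_le_one ENNReal.one_ne_top]
      simp [hq]
    -- generic tangent bound on a set
    have tangent : ∀ (S : Set α), MeasurableSet S → ∀ c : ℝ, 0 < c →
        (Real.log c + 1) * (P S).toReal - c * (Q S).toReal ≤ ∫ x in S, L x ∂P := by
      intro S hS c hc
      have hpt : ∀ᵐ x ∂(P.restrict S), Real.log c + 1 - c * (f x)⁻¹ ≤ L x := by
        filter_upwards [ae_restrict_of_ae hpos] with x hx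
        have h2 := Real.log_le_sub_one_of_pos (show (0:ℝ) < c * (f x)⁻¹ by positivity)
        rw [Real.log_mul hc.ne' (by positivity : (f x)⁻¹ ≠ 0), Real.log_inv] at h2
        linarith
      have h3 : ∫ x in S, (Real.log c + 1 - c * (f x)⁻¹) ∂P ≤ ∫ x in S, L x ∂P :=
        integral_mono_ae ((integrable_const _).sub (hinv_int.const_mul c)).integrableOn
          hIntL.integrableOn hpt
      have heval : ∫ x in S, (Real.log c + 1 - c * (f x)⁻¹) ∂P
          = (Real.log c + 1) * (P S).toReal - c * ∫ x in S, (f x)⁻¹ ∂P := by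
        rw [integral_sub (integrable_const _).integrableOn (hinv_int.const_mul c).integrableOn,
          integral_const_mul]
        simp [mul_comm, Measure.real]
        exact Or.inl rfl
      have h4 : c * ∫ x in S, (f x)⁻¹ ∂P ≤ c * (Q S).toReal :=
        mul_le_mul_of_nonneg_left (hinv_le S hS) hc.le
      linarith
    have hIA : p * (Real.log p - Real.log q) ≤ ∫ x in A, L x ∂P := by
      rcases eq_or_lt_of_le hp0 with hp0' | hp0'
      · have hPA0 : P A = 0 := by
          have := measure_ne_top P A
          rw [hp] at hp0'
          rcases ENNReal.toReal_eq_zero_iff (P A) |>.mp hp0'.symm with h | h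
          · exact h
          · exact absurd h this
        rw [← hp0', Measure.restrict_eq_zero.mpr hPA0]
        simp
      · have hb := tangent A hAm (p/q) (div_pos hp0' hq0)
        have heq : (Real.log (p/q) + 1) * p - (p/q) * q = p * (Real.log p - Real.log q) := by
          rw [Real.log_div hp0'.ne' hq0.ne', div_mul_cancel₀ _ hq0.ne']
          ring
        rw [← hp, ← hq] at hb
        linarith
    have hIAc : (1-p) * (Real.log (1-p) - Real.log (1-q)) ≤ ∫ x in Aᶜ, L x ∂P := by
      have hb := tangent Aᶜ hAm.compl ((1-p)/(1-q))
        (div_pos (by linarith) (by linarith))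
      rw [hPAc, hQAc] at hb
      have heq : (Real.log ((1-p)/(1-q)) + 1) * (1-p) - ((1-p)/(1-q)) * (1-q)
          = (1-p) * (Real.log (1-p) - Real.log (1-q)) := by
        rw [Real.log_div (by linarith : (1:ℝ)-p ≠ 0) (by linarith : (1:ℝ)-q ≠ 0),
          div_mul_cancel₀ _ (by linarith : (1:ℝ)-q ≠ 0)]
        ring
      linarith
    have hIsum : (∫ x in A, L x ∂P) + ∫ x in Aᶜ, L x ∂P = ∫ x, L x ∂P :=
      integral_add_compl hAm hIntL
    have hphi : 2*(q-p)^2 ≤ ∫ x, L x ∂P := by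
      have := aux_pinsker_real p q hp0 hpq.le hq1
      linarith
    have hsq : 2*(q-p) ≤ Real.sqrt (2 * ∫ x, L x ∂P) := by
      have h4 : (2*(q-p))^2 ≤ 2 * ∫ x, L x ∂P := by nlinarith
      calc 2*(q-p) = Real.sqrt ((2*(q-p))^2) := (Real.sqrt_sq (by linarith)).symm
        _ ≤ Real.sqrt (2 * ∫ x, L x ∂P) := Real.sqrt_le_sqrt h4
    linarith
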